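/- Let H=(X,S) be a hypergraph with X = {x_1,…,x_n} and S = {s_1,…,s_m}, where every hyperedge s_j is nonempty and no element x_i belongs to all hyperedges s_1,…,s_m. Define the split graph G=(V,E) by V := {a,b} ∪ {u_i : i ∈ [n]} ∪ {w_j : j ∈ [m]} and E := all 2-element subsets of {a,b} ∪ {u_i : i ∈ [n]} together with {{u_i, w_j} : i ∈ [n], j ∈ [m], x_i ∈ s_j}. Then the map F : C_{𝒞ℛ𝒟ℱ,G}[{a}] → Tr(H) given by F(g) = {x_i : i ∈ [n], g(u_i) = 1} is a bijection onto the set of minimal hitting sets of H. -/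

import Mathlib

open Set

variable {V : Type*}

/-- The set of vertices on which `f` takes value `i`. -/
def Vlevel (f : V → ℕ) (i : ℕ) : Set V := {v | f v = i}

/-- Closed neighborhood of `v` inside the induced subgraph `G[W]`. -/
def closedNbhdIn (G : SimpleGraph V) (W : Set V) (v : V) : Set V :=
  {u ∈ W | u = v ∨ G.Adj u v}

/-- Closed neighborhood of a set `A` inside the induced subgraph `G[W]`. -/
def closedNbhdSetIn (G : SimpleGraph V) (W A : Set V) : Set V :=
  ⋃ u ∈ A, closedNbhdIn G W u

/-- Private neighborhood `P_{G[W],A}(v) = N[v] \ N[A \ {v}]` inside `G[W]`. -/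
def privNbhd (G : SimpleGraph V) (W A : Set V) (v : V) : Set V :=
  closedNbhdIn G W v \ closedNbhdSetIn G W (A \ {v})

/-- Closed neighborhood `N[v]` in `G`. -/
def closedNbhd (G : SimpleGraph V) (v : V) : Set V := {u | u = v ∨ G.Adj u v}

/-- Closed neighborhood `N[A]` of a set in `G`. -/
def closedNbhdSet (G : SimpleGraph V) (A : Set V) : Set V := ⋃ v ∈ A, closedNbhd G v

/-- Open neighborhood `N(A)` of a set in `G`. -/
def openNbhdSet (G : SimpleGraph V) (A : Set V) : Set V := ⋃ v ∈ A, G.neighborSet v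

/-- Characteristic function of a set. -/
noncomputable def chi (S : Set V) : V → ℕ := S.indicator 1

/-- Roman dominating function: values in {0,1,2}, and every vertex of value 0 has
a neighbor of value 2. -/
def IsRDF (G : SimpleGraph V) (f : V → ℕ) : Prop :=
  (∀ v, f v ≤ 2) ∧ ∀ v, f v = 0 → ∃ u, G.Adj v u ∧ f u = 2

/-- `f` is minimal with respect to the pointwise order among functions with property `P`. -/
def MinimalWrt (P : (V → ℕ) → Prop) (f : V → ℕ) : Prop :=
  P f ∧ ∀ g, P g → g ≤ f → g = f

/-- `C_{P,G}[A]`: minimal functions with property `P` whose set of vertices of value 2 is `A`. -/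
def CSet (P : (V → ℕ) → Prop) (A : Set V) : Set (V → ℕ) :=
  {f | MinimalWrt P f ∧ Vlevel f 2 = A}

/-- Nice Roman domination property. -/
def IsNiceRDP (G : SimpleGraph V) (P : (V → ℕ) → Prop) : Prop :=
  (∀ f, P f → IsRDF G f) ∧
  (∀ f, P f → ∀ v ∈ Vlevel f 0, P (f + chi {v})) ∧
  (∀ f, P f → ∀ v ∈ Vlevel f 2,
    (P (f - chi {v}) ↔ privNbhd G (Vlevel f 0 ∪ Vlevel f 2) (Vlevel f 2) v ⊆ {v}))

/-- Maximal Roman dominating function: an Rdf such that `V_0(f)` is not a dominating set. -/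
def IsMRDF (G : SimpleGraph V) (f : V → ℕ) : Prop :=
  IsRDF G f ∧ closedNbhdSet G (Vlevel f 0) ≠ Set.univ

/-- Total Roman dominating function: an Rdf such that `G[V_1(f) ∪ V_2(f)]` has no isolated
vertices. -/
def IsTRDF (G : SimpleGraph V) (f : V → ℕ) : Prop :=
  IsRDF G f ∧ ∀ v ∈ Vlevel f 1 ∪ Vlevel f 2, ∃ u ∈ Vlevel f 1 ∪ Vlevel f 2, G.Adj v u

/-- Connected Roman dominating function: an Rdf such that `G[V_1(f) ∪ V_2(f)]` is connected. -/
def IsCRDF (G : SimpleGraph V) (f : V → ℕ) : Prop :=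
  IsRDF G f ∧ (G.induce (Vlevel f 1 ∪ Vlevel f 2)).Connected

/-- Vertex set of the split graph built from a hypergraph: `Sum.inl 0 = a`,
`Sum.inl 1 = b`, `Sum.inr (Sum.inl i) = u_i`, `Sum.inr (Sum.inr j) = w_j`. -/
abbrev SplitVert (n m : ℕ) := (Fin 2) ⊕ ((Fin n) ⊕ (Fin m))

/-- "Clique side" vertices: `a`, `b` and the `u_i`. -/
def SplitLeft {n m : ℕ} : SplitVert n m → Prop
  | Sum.inr (Sum.inr _) => False
  | _ => True

/-- `x = u_i` and `y = w_j` with `x_i ∈ s_j`. -/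
def UWEdge {n m : ℕ} (s : Fin m → Set (Fin n)) (x y : SplitVert n m) : Prop :=
  ∃ i j, x = Sum.inr (Sum.inl i) ∧ y = Sum.inr (Sum.inr j) ∧ i ∈ s j

/-- The split graph built from the hypergraph `(Fin n, s)`: a clique on
`{a, b} ∪ {u_i : i}` together with edges `u_i w_j` whenever `x_i ∈ s_j`. -/
def SplitGraph (n m : ℕ) (s : Fin m → Set (Fin n)) : SimpleGraph (SplitVert n m) where
  Adj x y := x ≠ y ∧ (SplitLeft x ∧ SplitLeft y ∨ UWEdge s x y ∨ UWEdge s y x)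
  symm := by
    constructor
    rintro x y ⟨hxy, h⟩
    exact ⟨hxy.symm, by tauto⟩
  loopless := by constructor; rintro x ⟨h, -⟩; exact h rfl

/-- `D` is a minimal hitting set (transversal) of the hypergraph `(Fin n, s)`. -/
def IsMinHittingSet {n m : ℕ} (s : Fin m → Set (Fin n)) (D : Set (Fin n)) : Prop :=
  (∀ j, (D ∩ s j).Nonempty) ∧
  ∀ D' ⊆ D, (∀ j, (D' ∩ s j).Nonempty) → D' = D

section Aux

open Classical in
/-- The canonical cRdf associated to a set `D`: `a ↦ 2`, `b ↦ 0`,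
`u_i ↦ 1` iff `i ∈ D`, `w_j ↦ 1`. -/
noncomputable def splitFun {n m : ℕ} (D : Set (Fin n)) : SplitVert n m → ℕ
  | Sum.inl k => if k = 0 then 2 else 0
  | Sum.inr (Sum.inl i) => if i ∈ D then 1 else 0
  | Sum.inr (Sum.inr _) => 1

lemma fin2_cases : ∀ k : Fin 2, k = 0 ∨ k = 1 := by decide

variable {n m : ℕ} {s : Fin m → Set (Fin n)}

lemma adj_left {x y : SplitVert n m} (hxy : x ≠ y) (hx : SplitLeft x) (hy : SplitLeft y) :
    (SplitGraph n m s).Adj x y := ⟨hxy, Or.inl ⟨hx, hy⟩⟩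

lemma adj_uw {i : Fin n} {j : Fin m} (h : i ∈ s j) :
    (SplitGraph n m s).Adj (Sum.inr (Sum.inl i)) (Sum.inr (Sum.inr j)) :=
  ⟨by simp, Or.inr (Or.inl ⟨i, j, rfl, rfl, h⟩)⟩

lemma adj_w_elim {j : Fin m} {y : SplitVert n m}
    (h : (SplitGraph n m s).Adj (Sum.inr (Sum.inr j)) y) :
    ∃ i, y = Sum.inr (Sum.inl i) ∧ i ∈ s j := by
  obtain ⟨-, h⟩ := h
  rcases h with ⟨hl, -⟩ | ⟨i, j', hx, hy, hm⟩ | ⟨i, j', hy, hx, hm⟩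
  · exact hl.elim
  · simp at hx
  · refine ⟨i, hy, ?_⟩
    have : j' = j := by simpa using hx.symm
    exact this ▸ hm

lemma exists_adj_of_connected {V : Type*} {G : SimpleGraph V} {W : Set V}
    (h : (G.induce W).Connected) {v x : V} (hv : v ∈ W) (hx : x ∈ W) (hvx : v ≠ x) :
    ∃ u ∈ W, G.Adj v u := by
  obtain ⟨p⟩ := h.preconnected ⟨v, hv⟩ ⟨x, hx⟩
  have hnil : ¬ p.Nil := SimpleGraph.Walk.not_nil_of_ne (by simp [Subtype.ext_iff, hvx])
  have hadj := SimpleGraph.Walk.adj_snd hnil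
  exact ⟨(p.getVert 1).1, (p.getVert 1).2, hadj⟩

lemma splitFun_u_eq_one {D : Set (Fin n)} {i : Fin n} :
    splitFun (m := m) D (Sum.inr (Sum.inl i)) = 1 ↔ i ∈ D := by
  simp only [splitFun]
  split <;> simp [*]

lemma splitFun_level2 (D : Set (Fin n)) :
    Vlevel (splitFun (m := m) D) 2 = {Sum.inl 0} := by
  ext x
  rcases x with k | i | j
  · simp only [Vlevel, splitFun, Set.mem_setOf_eq, Set.mem_singleton_iff]
    split <;> simp_all
  · simp only [Vlevel, splitFun, Set.mem_setOf_eq, Set.mem_singleton_iff]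
    split <;> simp
  · simp [Vlevel, splitFun]

lemma splitFun_mem_support {D : Set (Fin n)} {x : SplitVert n m} :
    x ∈ Vlevel (splitFun (m := m) D) 1 ∪ Vlevel (splitFun D) 2 ↔
      x = Sum.inl 0 ∨ (∃ i ∈ D, x = Sum.inr (Sum.inl i)) ∨ ∃ j, x = Sum.inr (Sum.inr j) := by
  rcases x with k | i | j
  · simp only [Vlevel, splitFun, Set.mem_union, Set.mem_setOf_eq]
    split <;> simp_all
  · simp only [Vlevel, splitFun, Set.mem_union, Set.mem_setOf_eq]
    split <;> simp_all
  · simp [Vlevel, splitFun]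

lemma splitFun_isCRDF {D : Set (Fin n)} (hhit : ∀ j, (D ∩ s j).Nonempty) :
    IsCRDF (SplitGraph n m s) (splitFun D) := by
  constructor
  · constructor
    · intro v
      rcases v with k | i | j
      · simp only [splitFun]; split <;> omega
      · simp only [splitFun]; split <;> omega
      · simp [splitFun]
    · intro v hv
      refine ⟨Sum.inl 0, ?_, by simp [splitFun]⟩
      rcases v with k | i | j
      · refine adj_left ?_ trivial trivial
        intro h
        have : k = 0 := by simpa using h
        simp [splitFun, this] at hv
      · exact adj_left (by simp) trivial trivial
      · simp [splitFun] at hv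
  · set W := Vlevel (splitFun (m := m) D) 1 ∪ Vlevel (splitFun D) 2 with hW
    have haW : (Sum.inl 0 : SplitVert n m) ∈ W := splitFun_mem_support.2 (Or.inl rfl)
    have key : ∀ z : W, ((SplitGraph n m s).induce W).Reachable z ⟨Sum.inl 0, haW⟩ := by
      rintro ⟨z, hz⟩
      rcases splitFun_mem_support.1 hz with rfl | ⟨i, hi, rfl⟩ | ⟨j, rfl⟩
      · rfl
      · exact SimpleGraph.Adj.reachable
          (by exact adj_left (by simp) trivial trivial :
            ((SplitGraph n m s).induce W).Adj ⟨_, hz⟩ ⟨_, haW⟩)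
      · obtain ⟨i, hiD, hij⟩ := hhit j
        have hiW : (Sum.inr (Sum.inl i) : SplitVert n m) ∈ W :=
          splitFun_mem_support.2 (Or.inr (Or.inl ⟨i, hiD, rfl⟩))
        have h1 : ((SplitGraph n m s).induce W).Adj ⟨_, hz⟩ ⟨_, hiW⟩ :=
          (adj_uw hij).symm
        have h2 : ((SplitGraph n m s).induce W).Adj ⟨_, hiW⟩ ⟨_, haW⟩ :=
          adj_left (by simp) trivial trivial
        exact h1.reachable.trans h2.reachable
    exact (SimpleGraph.connected_iff_exists_forall_reachable _).mpr
      ⟨⟨Sum.inl 0, haW⟩, fun w => (key w).symm⟩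

/-- For any cRdf `f` with `V_2(f) = {a}`, every `w_j` has value 1. -/
lemma crdf_w_eq_one {f : SplitVert n m → ℕ} (hf : IsCRDF (SplitGraph n m s) f)
    (h2 : Vlevel f 2 = {Sum.inl 0}) (j : Fin m) : f (Sum.inr (Sum.inr j)) = 1 := by
  have hle := hf.1.1 (Sum.inr (Sum.inr j))
  have hne2 : f (Sum.inr (Sum.inr j)) ≠ 2 := by
    intro h
    have : (Sum.inr (Sum.inr j) : SplitVert n m) ∈ Vlevel f 2 := h
    rw [h2] at this
    simp at this
  have hne0 : f (Sum.inr (Sum.inr j)) ≠ 0 := by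
    intro h0
    obtain ⟨u, hadj, hu2⟩ := hf.1.2 _ h0
    have : u ∈ Vlevel f 2 := hu2
    rw [h2] at this
    obtain ⟨i, hiu, -⟩ := adj_w_elim hadj
    rw [this] at hiu
    simp at hiu
  omega

/-- For any cRdf `f` with `V_2(f) = {a}`, `{i | f u_i = 1}` is a hitting set. -/
lemma crdf_hits {f : SplitVert n m → ℕ} (hf : IsCRDF (SplitGraph n m s) f)
    (h2 : Vlevel f 2 = {Sum.inl 0}) (j : Fin m) :
    ({i | f (Sum.inr (Sum.inl i)) = 1} ∩ s j).Nonempty := by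
  have haW : (Sum.inl 0 : SplitVert n m) ∈ Vlevel f 1 ∪ Vlevel f 2 := by
    right; rw [h2]; rfl
  have hwW : (Sum.inr (Sum.inr j) : SplitVert n m) ∈ Vlevel f 1 ∪ Vlevel f 2 :=
    Or.inl (crdf_w_eq_one hf h2 j)
  obtain ⟨u, huW, hadj⟩ := exists_adj_of_connected hf.2 hwW haW (by simp)
  obtain ⟨i, rfl, his⟩ := adj_w_elim hadj
  have h1 : f (Sum.inr (Sum.inl i)) = 1 := by
    rcases huW with h | h
    · exact h
    · rw [h2] at h; simp at h
  exact ⟨i, h1, his⟩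

/-- A minimal cRdf with `V_2 = {a}` equals `splitFun` of its level-1 `u`-set. -/
lemma crdf_eq_splitFun {f : SplitVert n m → ℕ}
    (hmin : MinimalWrt (IsCRDF (SplitGraph n m s)) f)
    (h2 : Vlevel f 2 = {Sum.inl 0}) :
    f = splitFun {i | f (Sum.inr (Sum.inl i)) = 1} := by
  have hf := hmin.1
  have hfa : f (Sum.inl 0) = 2 := by
    have : (Sum.inl 0 : SplitVert n m) ∈ Vlevel f 2 := by rw [h2]; rfl
    exact this
  have hmono : splitFun {i | f (Sum.inr (Sum.inl i)) = 1} ≤ f := by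
    intro v
    rcases v with k | i | j
    · simp only [splitFun]
      split
      · subst ‹k = 0›; omega
      · omega
    · simp only [splitFun]
      split
      · exact le_of_eq (‹i ∈ {i | f (Sum.inr (Sum.inl i)) = 1}› : _ = 1).symm
      · omega
    · exact le_of_eq (crdf_w_eq_one hf h2 j).symm
  exact (hmin.2 _ (splitFun_isCRDF (crdf_hits hf h2)) hmono).symm

/-- `splitFun D` is a minimal cRdf when `D` is a minimal hitting set. -/
lemma splitFun_minimal {D : Set (Fin n)} (hD : IsMinHittingSet s D) :
    MinimalWrt (IsCRDF (SplitGraph n m s)) (splitFun D) := by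
  refine ⟨splitFun_isCRDF hD.1, fun g hg hle => ?_⟩
  have hga : g (Sum.inl 0) = 2 := by
    by_contra hga
    have hb0 : g (Sum.inl 1) = 0 := by
      have := hle (Sum.inl 1)
      simp [splitFun] at this
      omega
    obtain ⟨u, -, hu2⟩ := hg.1.2 _ hb0
    rcases u with k | i | j
    · rcases fin2_cases k with rfl | rfl
      · exact hga hu2
      · have := hle (Sum.inl 1); simp [splitFun] at this; omega
    · have := hle (Sum.inr (Sum.inl i)); simp only [splitFun] at this
      split at this <;> omega
    · have := hle (Sum.inr (Sum.inr j)); simp only [splitFun] at this; omega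
  have hg2 : Vlevel g 2 = {Sum.inl 0} := by
    ext v
    simp only [Vlevel, Set.mem_setOf_eq, Set.mem_singleton_iff]
    constructor
    · intro hv
      rcases v with k | i | j
      · rcases fin2_cases k with rfl | rfl
        · rfl
        · have := hle (Sum.inl 1); simp [splitFun] at this; omega
      · have := hle (Sum.inr (Sum.inl i)); simp only [splitFun] at this
        split at this <;> omega
      · have := hle (Sum.inr (Sum.inr j)); simp only [splitFun] at this; omega
    · rintro rfl; exact hga
  have hsub : {i | g (Sum.inr (Sum.inl i)) = 1} ⊆ D := by
    intro i hi
    have := hle (Sum.inr (Sum.inl i))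
    simp only [splitFun] at this
    by_contra hiD
    rw [if_neg hiD] at this
    exact absurd (Set.mem_setOf_eq ▸ hi) (by omega)
  have hDeq : {i | g (Sum.inr (Sum.inl i)) = 1} = D := hD.2 _ hsub (crdf_hits hg hg2)
  funext v
  rcases v with k | i | j
  · rcases fin2_cases k with rfl | rfl
    · simp [splitFun, hga]
    · have := hle (Sum.inl 1); simp [splitFun] at this ⊢; omega
  · simp only [splitFun]
    split
    · exact (Set.ext_iff.mp hDeq i).2 ‹i ∈ D›
    · have h1 := hle (Sum.inr (Sum.inl i))
      simp only [splitFun, if_neg ‹i ∉ D›] at h1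
      omega
  · exact crdf_w_eq_one hg hg2 j

end Aux

/-- `F(g) = {x_i : g(u_i) = 1}` is a bijection from
`C_{CRDF,G}[{a}]` onto the set of minimal hitting sets of the hypergraph. -/
theorem stmt17 (n m : ℕ) (s : Fin m → Set (Fin n))
    (hne : ∀ j, (s j).Nonempty)
    (hnotall : ∀ i : Fin n, ∃ j, i ∉ s j) :
    Set.BijOn
      (fun g : SplitVert n m → ℕ => {i : Fin n | g (Sum.inr (Sum.inl i)) = 1})
      (CSet (IsCRDF (SplitGraph n m s)) {Sum.inl 0})
      {D : Set (Fin n) | IsMinHittingSet s D} := by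
  refine ⟨?_, ?_, ?_⟩
  · rintro f ⟨hmin, h2⟩
    have hfe := crdf_eq_splitFun hmin h2
    refine ⟨crdf_hits hmin.1 h2, fun D' hsub hhit' => ?_⟩
    have hle : splitFun D' ≤ f := by
      rw [hfe]
      intro v
      rcases v with k | i | j
      · exact le_refl _
      · simp only [splitFun]
        split
        · rw [if_pos (hsub ‹i ∈ D'›)]
        · omega
      · exact le_refl _
    have heq := hmin.2 _ (splitFun_isCRDF hhit') hle
    refine Set.Subset.antisymm hsub (fun i hi => ?_)
    have h1 : splitFun (m := m) D' (Sum.inr (Sum.inl i)) = 1 := by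
      rw [heq]; exact hi
    exact splitFun_u_eq_one.mp h1
  · rintro f ⟨hmin, h2⟩ f' ⟨hmin', h2'⟩ heq
    rw [crdf_eq_splitFun hmin h2, crdf_eq_splitFun hmin' h2']
    exact congrArg splitFun heq
  · rintro D hD
    refine ⟨splitFun D, ⟨splitFun_minimal hD, splitFun_level2 D⟩, ?_⟩
    ext i
    exact splitFun_u_eq_one
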